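/- arXiv:1302.6291 — 2 statements merged into one kernel-verified Lean document; each statement's English description precedes it below -/
import Mathlib

section
/- Let S be a generalized left-symmetric algebra over a field k with commutation factor ε on an abelian group Γ, and let M be an S-bimodule, i.e., a Γ-graded space with left action (x,m) ↦ x·m and right action (m,x) ↦ m·x of degree-compatible type satisfying (x·y)·m − x·(y·m) = ε(α,β)((y·x)·m − y·(x·m)) and (x·m)·y − x·(m·y) = ε(α,γ)((m·x)·y − m·(x·y)) for x ∈ S_α, y ∈ S_β, m ∈ M_γ. Then C¹(S,M) = Hom(S,M) = ⊕_γ Hom_γ(S,M), equipped with the left action (x·f)(y) := x·f(y) − ε(α,γ)f(x·y) + ε(α,γ)f(x)·y for x ∈ S_α, f ∈ Hom_γ(S,M), and the zero right action, is an antisymmetric S-bimodule (i.e., it satisfies the first bimodule identity (x·y)·f − x·(y·f) = ε(α,β)((y·x)·f − y·(x·f))). -/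
def IsCommutationFactor {k Γ : Type*} [Field k] [AddCommGroup Γ] (ε : Γ → Γ → k) : Prop :=
  (∀ α β, ε α β * ε β α = 1) ∧
  (∀ α β γ, ε α (β + γ) = ε α β * ε α γ) ∧
  (∀ α β γ, ε (α + β) γ = ε α γ * ε β γ)

/-- The left action of a homogeneous `x ∈ S_α` on a homogeneous map `f ∈ Hom_γ(S,M)`:
`(x·f)(y) = x·f(y) − ε(α,γ) f(x·y) + ε(α,γ) f(x)·y`. -/
def c1Act {k Γ S M : Type*} [Field k] [AddCommGroup Γ] [AddCommGroup S] [Module k S]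
    [AddCommGroup M] [Module k M] (ε : Γ → Γ → k) (mul : S →ₗ[k] S →ₗ[k] S)
    (l : S →ₗ[k] M →ₗ[k] M) (r : M →ₗ[k] S →ₗ[k] M)
    (α γ : Γ) (x : S) (f : S → M) : S → M :=
  fun y => l x (f y) - ε α γ • f (mul x y) + ε α γ • r (f x) y

/-- `C¹(S,M) = Hom(S,M)` with the action `(x·f)(y) = x·f(y) − ε(α,γ)f(x·y) + ε(α,γ)f(x)·y`
and zero right action is an antisymmetric `S`-bimodule: the first bimodule identity
`(x·y)·f − x·(y·f) = ε(α,β)((y·x)·f − y·(x·f))` holds. -/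
theorem stmt4 {k Γ S M : Type*} [Field k] [CharZero k] [AddCommGroup Γ]
    [AddCommGroup S] [Module k S] [AddCommGroup M] [Module k M]
    (ε : Γ → Γ → k) (𝒜 : Γ → Submodule k S) (ℳ : Γ → Submodule k M)
    (mul : S →ₗ[k] S →ₗ[k] S) (l : S →ₗ[k] M →ₗ[k] M) (r : M →ₗ[k] S →ₗ[k] M)
    (hε : IsCommutationFactor ε)
    (hgr : ∀ ⦃α β : Γ⦄ ⦃x y : S⦄, x ∈ 𝒜 α → y ∈ 𝒜 β → mul x y ∈ 𝒜 (α + β))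
    (hlsi : ∀ ⦃α β : Γ⦄ ⦃x y : S⦄ (z : S), x ∈ 𝒜 α → y ∈ 𝒜 β →
      mul (mul x y) z - mul x (mul y z) = ε α β • (mul (mul y x) z - mul y (mul x z)))
    (hdegl : ∀ ⦃α γ : Γ⦄ ⦃x : S⦄ ⦃m : M⦄, x ∈ 𝒜 α → m ∈ ℳ γ → l x m ∈ ℳ (α + γ))
    (hdegr : ∀ ⦃α γ : Γ⦄ ⦃x : S⦄ ⦃m : M⦄, x ∈ 𝒜 α → m ∈ ℳ γ → r m x ∈ ℳ (γ + α))
    (hbm1 : ∀ ⦃α β : Γ⦄ ⦃x y : S⦄ (m : M), x ∈ 𝒜 α → y ∈ 𝒜 β →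
      l (mul x y) m - l x (l y m) = ε α β • (l (mul y x) m - l y (l x m)))
    (hbm2 : ∀ ⦃α γ : Γ⦄ ⦃x : S⦄ ⦃m : M⦄ (y : S), x ∈ 𝒜 α → m ∈ ℳ γ →
      r (l x m) y - l x (r m y) = ε α γ • (r (r m x) y - r m (mul x y)))
    {α β γ : Γ} {x y : S} (hx : x ∈ 𝒜 α) (hy : y ∈ 𝒜 β)
    (f : S →ₗ[k] M) (hf : ∀ ⦃δ : Γ⦄ ⦃s : S⦄, s ∈ 𝒜 δ → f s ∈ ℳ (δ + γ)) :
    ∀ z : S,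
      c1Act ε mul l r (α + β) γ (mul x y) ⇑f z -
        c1Act ε mul l r α (β + γ) x (c1Act ε mul l r β γ y ⇑f) z =
      ε α β • (c1Act ε mul l r (α + β) γ (mul y x) ⇑f z -
        c1Act ε mul l r β (α + γ) y (c1Act ε mul l r α γ x ⇑f) z) := by

  intro z
  obtain ⟨hε1, hε2, hε3⟩ := hε
  have h1 := hbm1 (f z) hx hy
  have h2 := congrArg f (hlsi z hx hy)
  simp only [map_sub, map_smul] at h2
  have h3 := hbm2 (m := f y) z hx (hf hy)
  have h4 := hbm2 (m := f x) z hy (hf hx)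
  have key : ε α β * ε β (α + γ) = ε β γ := by
    rw [hε2 β α γ, ← mul_assoc, hε1 α β, one_mul]
  have h4' : ε α β • (r (l y (f x)) z - l y (r (f x) z)) =
      ε β γ • (r (r (f x) y) z - r (f x) (mul y z)) := by
    rw [h4, smul_smul, key]
  rw [hε2 α β γ] at h3
  simp only [c1Act, map_sub, map_add, map_smul, LinearMap.sub_apply, LinearMap.add_apply,
    LinearMap.smul_apply, smul_sub, smul_add, smul_smul, hε2, hε3]
  have E : ∀ v : M, (ε α β * ε β α) • v = v := fun v => by rw [hε1 α β, one_smul]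
  linear_combination (norm := module) h1 + (-(ε α γ * ε β γ)) • h2 + (ε β γ) • h3 +
    (-(ε α γ)) • h4' +
    (ε α γ * ε β γ) • E (f (mul x (mul y z))) +
    (-(ε β γ)) • E (l x (f (mul y z))) +
    (-(ε α γ * ε β γ)) • E (r (f (mul x y)) z) +
    (ε β γ) • E (r (l x (f y)) z) +
    (ε α γ * ε β γ) • E (r (r (f x) y) z) +
    (-(ε α γ * ε β γ)) • E (r (f x) (mul y z))
end

section
/- Let S be the 3-dimensional complex left-symmetric superalgebra with homogeneous basis {x, y₁, y₂}, x even, y₁, y₂ odd, and multiplication x·x = 2x, x·y₁ = y₁, x·y₂ = y₂, y₁·y₂ = x, y₂·y₁ = −x (all other products of basis elements zero). Then S satisfies the left-symmetric superalgebra identity (a·b)·c − a·(b·c) = (−1)^{|a||b|}((b·a)·c − b·(a·c)) for all homogeneous a,b,c, and S is simple (it has no nonzero proper graded two-sided ideals). -/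
/-- The 3-dimensional complex superalgebra with basis `x = (1,0,0)` (even),
`y₁ = (0,1,0)`, `y₂ = (0,0,1)` (odd) and products
`x·x = 2x, x·y₁ = y₁, x·y₂ = y₂, y₁·y₂ = x, y₂·y₁ = −x` (others zero). -/
def lsaMul (u v : ℂ × ℂ × ℂ) : ℂ × ℂ × ℂ :=
  (2 * u.1 * v.1 + u.2.1 * v.2.2 - u.2.2 * v.2.1, u.1 * v.2.1, u.1 * v.2.2)

/-- `u` is homogeneous of parity `p` : even elements are multiples of `x`,
odd elements are in the span of `y₁, y₂`. -/
def lsaHomog (p : ZMod 2) (u : ℂ × ℂ × ℂ) : Prop :=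
  if p = 0 then u.2.1 = 0 ∧ u.2.2 = 0 else u.1 = 0

/-- `S` satisfies the left-symmetric superalgebra identity on homogeneous elements, and
`S` is simple: its multiplication is nonzero and the only graded two-sided ideals
are `0` and `S`. -/
theorem stmt18 :
    (∀ (pa pb : ZMod 2) (a b c : ℂ × ℂ × ℂ), lsaHomog pa a → lsaHomog pb b →
      lsaMul (lsaMul a b) c - lsaMul a (lsaMul b c) =
        (if pa = 1 ∧ pb = 1 then (-1 : ℂ) else 1) •
          (lsaMul (lsaMul b a) c - lsaMul b (lsaMul a c))) ∧
    (∃ u v : ℂ × ℂ × ℂ, lsaMul u v ≠ 0) ∧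
    (∀ I : Submodule ℂ (ℂ × ℂ × ℂ),
      (∀ v ∈ I, ∀ s : ℂ × ℂ × ℂ, lsaMul s v ∈ I ∧ lsaMul v s ∈ I) →
      (∀ v ∈ I, ((v.1, 0, 0) : ℂ × ℂ × ℂ) ∈ I) →
      I = ⊥ ∨ I = ⊤) := by
  refine ⟨?_, ⟨(1,0,0), (1,0,0), by simp [lsaMul, Prod.ext_iff]⟩, ?_⟩
  · intro pa pb a b c ha hb
    rcases (by decide : ∀ p : ZMod 2, p = 0 ∨ p = 1) pa with rfl | rfl <;>
      rcases (by decide : ∀ p : ZMod 2, p = 0 ∨ p = 1) pb with rfl | rfl <;>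
      simp_all [lsaHomog, lsaMul, Prod.ext_iff, Prod.smul_def, smul_eq_mul] <;>
      (try constructor) <;> (try constructor) <;> ring
  · intro I hmul hgr
    by_cases hbot : I = ⊥
    · exact Or.inl hbot
    right
    obtain ⟨v, hvI, hv0⟩ : ∃ v ∈ I, v ≠ 0 := by
      by_contra h
      push_neg at h
      exact hbot (le_antisymm (fun z hz => h z hz) bot_le)
    -- x = (1,0,0) ∈ I
    have hx : ((1,0,0) : ℂ × ℂ × ℂ) ∈ I := by
      by_cases h1 : v.1 ≠ 0
      · have := hgr v hvI
        have := I.smul_mem (v.1)⁻¹ this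
        simpa [Prod.smul_def, smul_eq_mul, inv_mul_cancel₀ h1] using this
      · push_neg at h1
        by_cases h2 : v.2.1 ≠ 0
        · have := (hmul v hvI (0,0,1)).2
          have h3 : lsaMul v (0,0,1) = (v.2.1, 0, 0) := by
            simp [lsaMul, Prod.ext_iff, h1]
          rw [h3] at this
          have := I.smul_mem (v.2.1)⁻¹ this
          simpa [Prod.smul_def, smul_eq_mul, inv_mul_cancel₀ h2] using this
        · push_neg at h2
          have h22 : v.2.2 ≠ 0 := by
            intro h3
            exact hv0 (by ext <;> simp [h1, h2, h3])
          have := (hmul v hvI (0,1,0)).2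
          have h3 : lsaMul v (0,1,0) = (-v.2.2, 0, 0) := by
            simp [lsaMul, Prod.ext_iff, h1]
          rw [h3] at this
          have := I.smul_mem (-(v.2.2)⁻¹) this
          simpa [Prod.smul_def, smul_eq_mul, inv_mul_cancel₀ h22] using this
    have hy1 : ((0,1,0) : ℂ × ℂ × ℂ) ∈ I := by
      have := (hmul _ hx (0,1,0)).2
      rwa [show lsaMul (1,0,0) (0,1,0) = ((0:ℂ),(1:ℂ),(0:ℂ)) from by simp [lsaMul]] at this
    have hy2 : ((0,0,1) : ℂ × ℂ × ℂ) ∈ I := by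
      have := (hmul _ hx (0,0,1)).2
      rwa [show lsaMul (1,0,0) (0,0,1) = ((0:ℂ),(0:ℂ),(1:ℂ)) from by simp [lsaMul]] at this
    rw [eq_top_iff]
    intro w _
    have : w = w.1 • ((1,0,0) : ℂ × ℂ × ℂ) + w.2.1 • (0,1,0) + w.2.2 • (0,0,1) := by
      ext <;> simp [Prod.smul_def]
    rw [this]
    exact I.add_mem (I.add_mem (I.smul_mem _ hx) (I.smul_mem _ hy1)) (I.smul_mem _ hy2)
end
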